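/- Let B be a nondegenerate alternating bilinear form on a finite-dimensional complex vector space V, let P : V → V be self-adjoint with respect to B, and let L be a P-invariant Lagrangian subspace. Denote by V_μ the generalized eigenspace of P for μ ∈ ℂ. Then: (a) V_μ and V_ν are B-orthogonal whenever μ ≠ ν; (b) the restriction of B to each V_μ is nondegenerate; (c) L is the internal direct sum of the subspaces L ∩ V_μ over the eigenvalues μ of P; (d) each L ∩ V_μ is a P-invariant Lagrangian subspace of (V_μ, B restricted to V_μ). -/

import Mathlib

open Module

/-- The generalized eigenspace of the operator `P` for the eigenvalue `μ`. -/
noncomputable def genEig {V : Type*} [AddCommGroup V] [Module ℂ V]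
    (P : V →ₗ[ℂ] V) (μ : ℂ) : Submodule ℂ V :=
  ⨆ k : ℕ, LinearMap.ker ((P - μ • (LinearMap.id : V →ₗ[ℂ] V)) ^ k)

lemma genEig_eq {V : Type*} [AddCommGroup V] [Module ℂ V]
    (P : V →ₗ[ℂ] V) (μ : ℂ) : genEig P μ = Module.End.maxGenEigenspace P μ := by
  rw [Module.End.maxGenEigenspace, Module.End.genEigenspace_top, genEig]
  congr 1
  ext k
  rw [Module.End.genEigenspace_nat]
  rfl

/-- **Eigendecomposition of invariant Lagrangian subspaces.**
Let `B` be a nondegenerate alternating bilinear form on a finite-dimensional complex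
vector space `V`, let `P` be self-adjoint with respect to `B`, and let `L` be a
`P`-invariant Lagrangian subspace.  Then: (a) generalized eigenspaces for distinct
eigenvalues are `B`-orthogonal; (b) the restriction of `B` to each generalized
eigenspace `V_μ` is nondegenerate; (c) `L` is the internal direct sum of the subspaces
`L ⊓ V_μ`; (d) each `L ⊓ V_μ` is a `P`-invariant Lagrangian subspace of
`(V_μ, B|_{V_μ})`. -/
theorem invariant_lagrangian_eigendecomposition
    {V : Type*} [AddCommGroup V] [Module ℂ V] [FiniteDimensional ℂ V]
    (B : V →ₗ[ℂ] V →ₗ[ℂ] ℂ)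
    (hBalt : ∀ v, B v v = 0)
    (hBnd : ∀ v, (∀ u, B v u = 0) → v = 0)
    (P : V →ₗ[ℂ] V)
    (hP : ∀ u v, B (P u) v = B u (P v))
    (L : Submodule ℂ V)
    (hLiso : ∀ u ∈ L, ∀ v ∈ L, B u v = 0)
    (hLdim : 2 * finrank ℂ L = finrank ℂ V)
    (hLinv : ∀ u ∈ L, P u ∈ L) :
    (∀ μ ν : ℂ, μ ≠ ν → ∀ u ∈ genEig P μ, ∀ v ∈ genEig P ν, B u v = 0) ∧
    (∀ μ : ℂ, ∀ u ∈ genEig P μ, (∀ v ∈ genEig P μ, B u v = 0) → u = 0) ∧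
    (L = ⨆ μ : ℂ, L ⊓ genEig P μ) ∧
    (∀ μ : ℂ, Disjoint (L ⊓ genEig P μ)
      (⨆ (ν : ℂ) (_ : ν ≠ μ), L ⊓ genEig P ν)) ∧
    (∀ μ : ℂ,
      (∀ u ∈ L ⊓ genEig P μ, P u ∈ L ⊓ genEig P μ) ∧
      (∀ u ∈ L ⊓ genEig P μ, ∀ v ∈ L ⊓ genEig P μ, B u v = 0) ∧
      2 * finrank ℂ ↥(L ⊓ genEig P μ) = finrank ℂ ↥(genEig P μ)) := by
  simp only [genEig_eq]
  set E : ℂ → Submodule ℂ V := Module.End.maxGenEigenspace P with hE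
  -- reflexivity of B
  have hRefl : LinearMap.BilinForm.IsRefl B := by
    intro x y hxy
    have h := hBalt (x + y)
    simp only [map_add, LinearMap.add_apply, hBalt, hxy] at h
    simpa using h
  -- key induction for part (a)
  have key : ∀ n k l (μ ν : ℂ), μ ≠ ν → ∀ u v : V, k + l ≤ n →
      ((P - μ • (1 : Module.End ℂ V)) ^ k) u = 0 →
      ((P - ν • (1 : Module.End ℂ V)) ^ l) v = 0 → B u v = 0 := by
    intro n
    induction n with
    | zero =>
      intro k l μ ν hμν u v hn hu hv
      have hk : k = 0 := by omega
      subst hk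
      rw [pow_zero] at hu
      have : u = 0 := hu
      simp [this]
    | succ n ih =>
      intro k l μ ν hμν u v hn hu hv
      cases k with
      | zero =>
        rw [pow_zero] at hu
        have : u = 0 := hu
        simp [this]
      | succ k' =>
        cases l with
        | zero =>
          rw [pow_zero] at hv
          have : v = 0 := hv
          simp [this]
        | succ l' =>
          have hu' : ((P - μ • (1 : Module.End ℂ V)) ^ k') ((P - μ • (1 : Module.End ℂ V)) u) = 0 := by
            rw [← Module.End.mul_apply, ← pow_succ]
            exact hu
          have hv' : ((P - ν • (1 : Module.End ℂ V)) ^ l') ((P - ν • (1 : Module.End ℂ V)) v) = 0 := by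
            rw [← Module.End.mul_apply, ← pow_succ]
            exact hv
          have h1 : B ((P - μ • (1 : Module.End ℂ V)) u) v = 0 :=
            ih k' (l' + 1) μ ν hμν _ _ (by omega) hu' hv
          have h2 : B u ((P - ν • (1 : Module.End ℂ V)) v) = 0 :=
            ih (k' + 1) l' μ ν hμν _ _ (by omega) hu hv'
          simp only [LinearMap.sub_apply, LinearMap.smul_apply, Module.End.one_apply,
            map_sub, map_smul, smul_eq_mul] at h1 h2
          rw [hP u v] at h1
          have h3 : (μ - ν) * B u v = 0 := by
            have h1' : B u (P v) - μ * B u v = 0 := by simpa using h1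
            have h2' : B u (P v) - ν * B u v = 0 := by simpa using h2
            ring_nf
            linear_combination h2' - h1'
          rcases mul_eq_zero.mp h3 with h | h
          · exact absurd (sub_eq_zero.mp h) hμν
          · exact h
  have parta : ∀ μ ν : ℂ, μ ≠ ν → ∀ u ∈ E μ, ∀ v ∈ E ν, B u v = 0 := by
    intro μ ν hμν u hu v hv
    rw [hE, Module.End.mem_maxGenEigenspace] at hu hv
    obtain ⟨k, hk⟩ := hu
    obtain ⟨l, hl⟩ := hv
    exact key (k + l) k l μ ν hμν u v le_rfl hk hl
  have htopV : ⨆ μ, E μ = ⊤ := Module.End.iSup_maxGenEigenspace_eq_top P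
  have hindep : iSupIndep E := Module.End.independent_maxGenEigenspace P
  -- part (b)
  have partb : ∀ μ : ℂ, ∀ u ∈ E μ, (∀ v ∈ E μ, B u v = 0) → u = 0 := by
    intro μ u hu h
    refine hBnd u fun v => ?_
    have hle : (⊤ : Submodule ℂ V) ≤ LinearMap.ker (B u) := by
      rw [← htopV]
      refine iSup_le fun ν => ?_
      by_cases hνμ : ν = μ
      · subst hνμ; intro x hx; exact h x hx
      · intro x hx
        exact parta μ ν (fun hh => hνμ hh.symm) u hu x hx
    exact hle Submodule.mem_top
  -- part (c)
  have hc : L = ⨆ μ : ℂ, L ⊓ E μ := by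
    have htopL : ⨆ μ, Module.End.maxGenEigenspace (LinearMap.restrict P hLinv) μ = ⊤ :=
      Module.End.iSup_maxGenEigenspace_eq_top _
    calc L = Submodule.map L.subtype ⊤ := by
            rw [Submodule.map_top, Submodule.range_subtype]
      _ = Submodule.map L.subtype (⨆ μ, Module.End.maxGenEigenspace (LinearMap.restrict P hLinv) μ) := by
            rw [htopL]
      _ = ⨆ μ, Submodule.map L.subtype (Module.End.maxGenEigenspace (LinearMap.restrict P hLinv) μ) :=
            Submodule.map_iSup _ _
      _ = ⨆ μ : ℂ, L ⊓ E μ := by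
            refine iSup_congr fun μ => ?_
            rw [hE]
            exact (Submodule.inf_genEigenspace P L hLinv (k := ⊤) (μ := μ)).symm
  -- disjointness
  have hdisj : ∀ μ : ℂ, Disjoint (L ⊓ E μ) (⨆ (ν : ℂ) (_ : ν ≠ μ), L ⊓ E ν) := by
    intro μ
    exact (hindep μ).mono inf_le_right (iSup₂_mono fun ν _ => inf_le_right)
  -- L is its own orthogonal
  have hBndB : LinearMap.BilinForm.Nondegenerate B :=
    (LinearMap.IsRefl.nondegenerate_iff_separatingLeft hRefl).mpr hBnd
  have hLL : L = LinearMap.BilinForm.orthogonal B L := by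
    have hle : L ≤ LinearMap.BilinForm.orthogonal B L := fun x hx n hn => hLiso n hn x hx
    refine Submodule.eq_of_le_of_finrank_le hle ?_
    rw [LinearMap.BilinForm.finrank_orthogonal hBndB L]
    have := Submodule.finrank_le L
    omega
  refine ⟨parta, partb, hc, hdisj, fun μ => ?_⟩
  constructor
  · rintro u ⟨huL, huE⟩
    exact ⟨hLinv u huL,
      Module.End.mapsTo_maxGenEigenspace_of_comm (Commute.refl P) μ huE⟩
  constructor
  · rintro u ⟨huL, -⟩ v ⟨hvL, -⟩
    exact hLiso u huL v hvL
  -- dimension count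
  rw [show genEig P μ = E μ from genEig_eq P μ]
  set W : Submodule ℂ V := L ⊓ E μ with hW
  set S : Submodule ℂ V := ⨆ (ν : ℂ) (_ : ν ≠ μ), E ν with hS
  have hD : Disjoint (E μ) S := hindep μ
  have hT : E μ ⊔ S = ⊤ := by
    refine le_antisymm le_top ?_
    rw [← htopV]
    refine iSup_le fun ν => ?_
    by_cases hνμ : ν = μ
    · subst hνμ; exact le_sup_left
    · exact le_sup_of_le_right (le_iSup₂ (f := fun ν _ => E ν) ν hνμ)
  set O : Submodule ℂ V := LinearMap.BilinForm.orthogonal B W with hO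
  have hWO : W ≤ O := fun x hx n hn => hLiso n hn.1 x hx.1
  have hSO : S ≤ O := by
    rw [hS]
    refine iSup₂_le fun ν hνμ => fun x hx n hn => ?_
    exact parta μ ν (fun hh => hνμ hh.symm) n hn.2 x hx
  have hOEW : O ⊓ E μ = W := by
    refine le_antisymm ?_ (le_inf hWO inf_le_right)
    rintro x ⟨hxO, hxE⟩
    have hxL : x ∈ L := by
      have hLker : L ≤ LinearMap.ker (B.flip x) := by
        rw [hc]
        refine iSup_le fun ν => ?_
        by_cases hνμ : ν = μ
        · subst hνμ
          intro n hn
          simpa using hxO n hn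
        · rintro n ⟨-, hnE⟩
          simpa using parta ν μ hνμ n hnE x hxE
      rw [hLL]
      intro n hn
      simpa using hLker hn
    exact ⟨hxL, hxE⟩
  have hOsup : O = W ⊔ S := by
    refine le_antisymm ?_ (sup_le hWO hSO)
    intro x hx
    have hxT : x ∈ E μ ⊔ S := hT ▸ Submodule.mem_top
    obtain ⟨a, ha, b, hb, rfl⟩ := Submodule.mem_sup.mp hxT
    have hbO : b ∈ O := hSO hb
    have haW : a ∈ W := by
      rw [← hOEW]
      exact ⟨by simpa using O.sub_mem hx hbO, ha⟩
    exact Submodule.mem_sup.mpr ⟨a, haW, b, hb, rfl⟩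
  have hWS : W ⊓ S = ⊥ := by
    have : W ⊓ S ≤ E μ ⊓ S := inf_le_inf_right S inf_le_right
    rw [hD.eq_bot] at this
    exact le_bot_iff.mp this
  have f1 : finrank ℂ O = finrank ℂ V - finrank ℂ W :=
    LinearMap.BilinForm.finrank_orthogonal hBndB W
  have f2 : finrank ℂ ↥(W ⊔ S) + finrank ℂ ↥(W ⊓ S) = finrank ℂ W + finrank ℂ S :=
    Submodule.finrank_sup_add_finrank_inf_eq W S
  have f3 : finrank ℂ ↥(E μ ⊔ S) + finrank ℂ ↥(E μ ⊓ S) = finrank ℂ ↥(E μ) + finrank ℂ S :=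
    Submodule.finrank_sup_add_finrank_inf_eq (E μ) S
  rw [hT, hD.eq_bot, finrank_bot, finrank_top, add_zero] at f3
  rw [hWS, finrank_bot, add_zero, ← hOsup, f1] at f2
  have hWle : finrank ℂ W ≤ finrank ℂ V := Submodule.finrank_le W
  omega
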